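/- arXiv:1810.00779 — 5 statements merged into one kernel-verified Lean document; each statement's English description precedes it below -/
import Mathlib

section
/- For a positive integer x, write x = x₀·x₁² with x₀ squarefree. Then the number of residues s modulo 2x satisfying s² ≡ 0 (mod 4x) equals x₁. -/
theorem count_sqrt_zero_mod (x x₀ x₁ : ℕ) (hx : 0 < x) (hx₁ : 0 < x₁)
    (hsq : Squarefree x₀) (hdecomp : x = x₀ * x₁ ^ 2) :
    ((Finset.range (2 * x)).filter (fun s => 4 * x ∣ s ^ 2)).card = x₁ := by
  subst hdecomp
  have hx₀ : 0 < x₀ := Nat.pos_of_ne_zero hsq.ne_zero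
  set d : ℕ := 2 * x₀ * x₁ with hd
  have hdpos : 0 < d := by positivity
  have key : ∀ s : ℕ, 4 * (x₀ * x₁ ^ 2) ∣ s ^ 2 ↔ d ∣ s := by
    intro s
    constructor
    · intro h
      have h1 : (2 * x₁) ^ 2 ∣ s ^ 2 := by
        refine dvd_trans ?_ h
        ring_nf
        exact Dvd.intro x₀ (by ring)
      have h2 : 2 * x₁ ∣ s := by
        have := (Nat.pow_dvd_pow_iff (n := 2) (by norm_num)).mp h1
        exact this
      obtain ⟨t, ht⟩ := h2
      have h3 : x₀ ∣ t ^ 2 := by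
        have h4 : (4 * x₁ ^ 2) * x₀ ∣ (4 * x₁ ^ 2) * t ^ 2 := by
          have : s ^ 2 = (4 * x₁ ^ 2) * t ^ 2 := by rw [ht]; ring
          rw [← this]
          calc (4 * x₁ ^ 2) * x₀ = 4 * (x₀ * x₁ ^ 2) := by ring
          _ ∣ s ^ 2 := h
        exact (mul_dvd_mul_iff_left (by positivity : (4 * x₁ ^ 2 : ℕ) ≠ 0)).mp h4
      have h5 : x₀ ∣ t := (hsq.dvd_pow_iff_dvd (by norm_num)).mp h3
      obtain ⟨u, hu⟩ := h5
      exact ⟨u, by rw [ht, hu]; ring⟩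
    · rintro ⟨u, rfl⟩
      exact ⟨x₀ * u ^ 2, by ring⟩
  have hrange : 2 * (x₀ * x₁ ^ 2) = d * x₁ := by rw [hd]; ring
  have himg : (Finset.range (2 * (x₀ * x₁ ^ 2))).filter (fun s => 4 * (x₀ * x₁ ^ 2) ∣ s ^ 2)
      = (Finset.range x₁).image (fun k => d * k) := by
    ext s
    simp only [Finset.mem_filter, Finset.mem_range, Finset.mem_image, key, hrange]
    constructor
    · rintro ⟨hlt, k, rfl⟩
      exact ⟨k, by exact lt_of_mul_lt_mul_left hlt (Nat.zero_le d), rfl⟩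
    · rintro ⟨k, hk, rfl⟩
      exact ⟨(mul_lt_mul_iff_right₀ hdpos).mpr hk, ⟨k, rfl⟩⟩
  rw [himg, Finset.card_image_of_injective _ (mul_right_injective₀ hdpos.ne'),
    Finset.card_range]
end

section
/- For a positive integer x, the number of residues s modulo 2x with s² ≡ 0 (mod 4x) equals the sum over f with f² ∣ x of f·|μ(x/f²)|, where μ is the Möbius function. -/
/-- Uniqueness of the squarefree decomposition `x = b² k`. -/
lemma sq_mul_squarefree_unique {x b k f m : ℕ} (hx : 0 < x)
    (hbk : b ^ 2 * k = x) (hk : Squarefree k)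
    (hfm : f ^ 2 * m = x) (hm : Squarefree m) : f = b := by
  have hb0 : b ≠ 0 := by rintro rfl; simp at hbk; omega
  have hk0 : k ≠ 0 := by rintro rfl; simp at hbk; omega
  have hf0 : f ≠ 0 := by rintro rfl; simp at hfm; omega
  have hm0 : m ≠ 0 := by rintro rfl; simp at hfm; omega
  refine Nat.eq_of_factorization_eq hf0 hb0 fun p => ?_
  have h1 : (f ^ 2 * m).factorization p = (b ^ 2 * k).factorization p := by
    rw [hbk, hfm]
  rw [Nat.factorization_mul (pow_ne_zero 2 hf0) hm0,
      Nat.factorization_mul (pow_ne_zero 2 hb0) hk0,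
      Nat.factorization_pow, Nat.factorization_pow] at h1
  simp only [Finsupp.add_apply, Finsupp.smul_apply, smul_eq_mul] at h1
  have hmk : m.factorization p ≤ 1 := hm.natFactorization_le_one p
  have hkk : k.factorization p ≤ 1 := hk.natFactorization_le_one p
  omega

theorem count_sqrt_zero_mod_eq_sum (x : ℕ) (hx : 0 < x) :
    (((Finset.range (2 * x)).filter (fun s => 4 * x ∣ s ^ 2)).card : ℤ) =
      ∑ f ∈ (Finset.range (x + 1)).filter (fun f => f ^ 2 ∣ x),
        (f : ℤ) * |ArithmeticFunction.moebius (x / f ^ 2)| := by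
  obtain ⟨k, b, hbk, hk⟩ := Nat.sq_mul_squarefree x
  have hb0 : 0 < b := by
    rcases Nat.eq_zero_or_pos b with rfl | h; · simp at hbk; omega
    · exact h
  have hk0 : 0 < k := by
    rcases Nat.eq_zero_or_pos k with rfl | h; · simp at hbk; omega
    · exact h
  -- LHS = b
  have hL : ((Finset.range (2 * x)).filter (fun s => 4 * x ∣ s ^ 2)) =
      (Finset.range b).image (fun i => 2 * b * k * i) := by
    ext s
    simp only [Finset.mem_filter, Finset.mem_range, Finset.mem_image]
    constructor
    · rintro ⟨hs, hdvd⟩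
      have h4x : (2 * b) ^ 2 * k = 4 * x := by rw [← hbk]; ring
      have h2b : 2 * b ∣ s := by
        rw [← Nat.pow_dvd_pow_iff (two_ne_zero)]
        exact dvd_trans (h4x ▸ dvd_mul_right ((2*b)^2) k) hdvd
      obtain ⟨t, rfl⟩ := h2b
      have hkt : k ∣ t := by
        have h1 : (2 * b) ^ 2 * k ∣ (2 * b) ^ 2 * t ^ 2 := by
          rw [h4x]; convert hdvd using 1; ring
        have h2 : k ∣ t ^ 2 :=
          (mul_dvd_mul_iff_left (by positivity : ((2*b)^2 : ℕ) ≠ 0)).mp h1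
        exact (hk.dvd_pow_iff_dvd two_ne_zero).mp h2
      obtain ⟨i, rfl⟩ := hkt
      refine ⟨i, ?_, by ring⟩
      by_contra hib
      push_neg at hib
      have : 2 * x ≤ 2 * b * (k * i) := by
        calc 2 * x = 2 * b * k * b := by rw [← hbk]; ring
        _ ≤ 2 * b * k * i := by
            exact Nat.mul_le_mul_left _ hib
        _ = 2 * b * (k * i) := by ring
      omega
    · rintro ⟨i, hi, rfl⟩
      constructor
      · calc 2 * b * k * i < 2 * b * k * b := by
              have : 0 < 2 * b * k := by positivity
              exact (Nat.mul_lt_mul_left this).mpr hi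
          _ = 2 * x := by rw [← hbk]; ring
      · exact ⟨k * i ^ 2, by rw [← hbk]; ring⟩
  have hLcard : ((Finset.range (2 * x)).filter (fun s => 4 * x ∣ s ^ 2)).card = b := by
    rw [hL, Finset.card_image_of_injective _ (mul_right_injective₀ (by positivity)),
      Finset.card_range]
  -- RHS = b
  have hxb : x / b ^ 2 = k := by
    rw [← hbk, Nat.mul_div_cancel_left _ (by positivity)]
  have hbmem : b ∈ (Finset.range (x + 1)).filter (fun f => f ^ 2 ∣ x) := by
    simp only [Finset.mem_filter, Finset.mem_range]
    refine ⟨?_, ⟨k, hbk.symm⟩⟩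
    have : b ≤ b ^ 2 * k := by nlinarith
    omega
  rw [hLcard, Finset.sum_eq_single b]
  · rw [hxb]
    rcases ArithmeticFunction.moebius_ne_zero_iff_eq_or.mp
        (ArithmeticFunction.moebius_ne_zero_iff_squarefree.mpr hk) with h | h <;>
      rw [h] <;> simp
  · intro f hf hfb
    simp only [Finset.mem_filter, Finset.mem_range] at hf
    obtain ⟨hfx, m, hfm⟩ := hf
    have hxf : x / f ^ 2 = m := by
      have hf0 : f ≠ 0 := by rintro rfl; simp at hfm; omega
      rw [hfm, Nat.mul_div_cancel_left _ (by positivity)]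
    rw [hxf]
    have : ¬ Squarefree m := fun hm =>
      hfb (sq_mul_squarefree_unique hx hbk hk hfm.symm hm)
    rw [ArithmeticFunction.moebius_eq_zero_of_not_squarefree this]
    simp
  · intro h; exact absurd hbmem h
end

section
/- Define g_k(m) := Σ_{y² ∣ m} μ(y)·σ_{k-1}(m/y²), where σ_{k-1}(n) = Σ_{d ∣ n} d^{k-1} and μ is the Möbius function. Then for every positive integer m and integer k ≥ 2, g_k(m) = m^{k-1} · ∏_{p ∣ m, p prime} (1 + p^{-(k-1)}). -/
open Finset ArithmeticFunction

/-- `g_k(m) = Σ_{y² ∣ m} μ(y)·σ_{k-1}(m/y²)` -/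
noncomputable def gk (k m : ℕ) : ℤ :=
  ∑ y ∈ (Finset.range (m + 1)).filter (fun y => y ^ 2 ∣ m),
    ArithmeticFunction.moebius y * (ArithmeticFunction.sigma (k - 1) (m / y ^ 2) : ℤ)

/-- f(n) = μ(√n) if n is a perfect square, else 0. -/
noncomputable def sqMu : ArithmeticFunction ℤ :=
  ⟨fun n => if Nat.sqrt n ^ 2 = n then ArithmeticFunction.moebius (Nat.sqrt n) else 0,
    by simp⟩

lemma sqMu_apply (n : ℕ) :
    sqMu n = if Nat.sqrt n ^ 2 = n then ArithmeticFunction.moebius (Nat.sqrt n) else 0 := rfl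

lemma sqMu_sq (y : ℕ) : sqMu (y ^ 2) = ArithmeticFunction.moebius y := by
  have h : Nat.sqrt (y ^ 2) = y := Nat.sqrt_eq' y
  rw [sqMu_apply, h, if_pos rfl]

lemma sqMu_of_not_sq {n : ℕ} (h : Nat.sqrt n ^ 2 ≠ n) : sqMu n = 0 := by
  rw [sqMu_apply, if_neg h]

lemma sq_of_mul_sq {m n : ℕ} (hmn : m.Coprime n) (h : Nat.sqrt (m * n) ^ 2 = m * n) :
    Nat.sqrt m ^ 2 = m := by
  obtain ⟨d, hd⟩ := exists_eq_pow_of_mul_eq_pow (a := m) (b := n) (c := Nat.sqrt (m * n))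
    (by rw [Nat.isUnit_iff]; exact hmn) h.symm
  rw [hd, Nat.sqrt_eq']

lemma sqMu_mult : sqMu.IsMultiplicative := by
  constructor
  · have : (1 : ℕ) = 1 ^ 2 := by norm_num
    rw [this, sqMu_sq]; simp
  · intro m n hmn
    by_cases hm : Nat.sqrt m ^ 2 = m
    · by_cases hn : Nat.sqrt n ^ 2 = n
      · have hsq : (Nat.sqrt m * Nat.sqrt n) ^ 2 = m * n := by
          rw [mul_pow, hm, hn]
        have hcop : (Nat.sqrt m).Coprime (Nat.sqrt n) := by
          apply Nat.Coprime.coprime_dvd_left (Dvd.intro_left _ (by rw [← sq, hm]))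
          exact Nat.Coprime.coprime_dvd_right (Dvd.intro_left _ (by rw [← sq, hn])) hmn
        calc sqMu (m * n) = sqMu ((Nat.sqrt m * Nat.sqrt n) ^ 2) := by rw [hsq]
          _ = ArithmeticFunction.moebius (Nat.sqrt m * Nat.sqrt n) := sqMu_sq _
          _ = ArithmeticFunction.moebius (Nat.sqrt m) * ArithmeticFunction.moebius (Nat.sqrt n) :=
              ArithmeticFunction.isMultiplicative_moebius.2 hcop
          _ = sqMu m * sqMu n := by
              rw [← hm, ← hn, sqMu_sq, sqMu_sq, hm, hn]
      · have h1 : Nat.sqrt (m * n) ^ 2 ≠ m * n := fun h =>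
          hn (sq_of_mul_sq hmn.symm (by rwa [mul_comm]))
        rw [sqMu_of_not_sq h1, sqMu_of_not_sq hn, mul_zero]
    · have h1 : Nat.sqrt (m * n) ^ 2 ≠ m * n := fun h => hm (sq_of_mul_sq hmn h)
      rw [sqMu_of_not_sq h1, sqMu_of_not_sq hm, zero_mul]

/-- The convolution `sqMu * σ_K`. -/
noncomputable def gkF (K : ℕ) : ArithmeticFunction ℤ :=
  sqMu * (ArithmeticFunction.sigma K : ArithmeticFunction ℤ)

lemma gkF_mult (K : ℕ) : (gkF K).IsMultiplicative :=
  sqMu_mult.mul (ArithmeticFunction.isMultiplicative_sigma.natCast)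

lemma gkF_apply (K n : ℕ) :
    gkF K n = ∑ d ∈ n.divisors, sqMu d * (ArithmeticFunction.sigma K (n / d) : ℤ) := by
  rw [gkF, ArithmeticFunction.mul_apply, ← Nat.sum_divisorsAntidiagonal
    (fun x y => sqMu x * (ArithmeticFunction.sigma K y : ℤ))]
  simp [ArithmeticFunction.natCoe_apply]

lemma gk_eq_gkF (k m : ℕ) (hm : 0 < m) : gk k m = gkF (k - 1) m := by
  rw [gkF_apply, gk]
  rw [← Finset.sum_filter_add_sum_filter_not m.divisors (fun d => Nat.sqrt d ^ 2 = d)]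
  have h2 : ∑ d ∈ m.divisors.filter (fun d => ¬ Nat.sqrt d ^ 2 = d),
      sqMu d * (ArithmeticFunction.sigma (k-1) (m / d) : ℤ) = 0 := by
    apply Finset.sum_eq_zero
    intro d hd
    rw [Finset.mem_filter] at hd
    rw [sqMu_of_not_sq hd.2, zero_mul]
  rw [h2, add_zero]
  apply Finset.sum_nbij' (i := fun y => y ^ 2) (j := fun d => Nat.sqrt d)
  · intro y hy
    rw [Finset.mem_filter, Finset.mem_range] at hy
    rw [Finset.mem_filter, Nat.mem_divisors]
    refine ⟨⟨hy.2, hm.ne'⟩, ?_⟩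
    rw [Nat.sqrt_eq']
  · intro d hd
    rw [Finset.mem_filter, Nat.mem_divisors] at hd
    rw [Finset.mem_filter, Finset.mem_range, hd.2]
    refine ⟨Nat.lt_succ_of_le (le_trans (Nat.sqrt_le_self d) (Nat.le_of_dvd hm hd.1.1)), hd.1.1⟩
  · intro y _
    rw [Nat.sqrt_eq']
  · intro d hd
    rw [Finset.mem_filter] at hd
    exact hd.2
  · intro y _
    rw [sqMu_sq]

/-- The right-hand side as an arithmetic function. -/
noncomputable def rhsF (k : ℕ) : ArithmeticFunction ℚ :=
  ⟨fun n => if n = 0 then 0 else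
      (n : ℚ) ^ (k - 1) * ∏ p ∈ n.primeFactors, (1 + (p : ℚ) ^ (-((k : ℤ) - 1))), by simp⟩

lemma rhsF_apply {k n : ℕ} (hn : n ≠ 0) :
    rhsF k n = (n : ℚ) ^ (k - 1) * ∏ p ∈ n.primeFactors, (1 + (p : ℚ) ^ (-((k : ℤ) - 1))) := by
  show (if n = 0 then _ else _) = _
  rw [if_neg hn]

lemma rhsF_mult (k : ℕ) : (rhsF k).IsMultiplicative := by
  constructor
  · rw [rhsF_apply one_ne_zero]; simp
  · intro m n hmn
    rcases eq_or_ne m 0 with rfl | hm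
    · have : n = 1 := by simpa using hmn
      subst this
      simp [ArithmeticFunction.map_zero]
    rcases eq_or_ne n 0 with rfl | hn
    · simp [ArithmeticFunction.map_zero]
    rw [rhsF_apply (mul_ne_zero hm hn), rhsF_apply hm, rhsF_apply hn,
      hmn.primeFactors_mul, Finset.prod_union hmn.disjoint_primeFactors]
    push_cast
    ring

lemma sqMu_prime_pow {p : ℕ} (hp : p.Prime) (i : ℕ) :
    sqMu (p ^ i) = if i = 0 then 1 else if i = 2 then -1 else 0 := by
  rcases eq_or_ne i 0 with rfl | hi0
  · simpa using sqMu_mult.1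
  rcases eq_or_ne i 2 with rfl | hi2
  · rw [sqMu_sq, if_neg hi0, if_pos rfl,
      ArithmeticFunction.moebius_apply_prime hp]
  rw [if_neg hi0, if_neg hi2]
  by_cases hsq : Nat.sqrt (p ^ i) ^ 2 = p ^ i
  · -- p^i = y^2, y = p^j, 2j = i
    set y := Nat.sqrt (p ^ i) with hy
    have hyd : y ∣ p ^ i := Dvd.intro_left _ (by rw [← sq, hsq])
    obtain ⟨j, hj, hyj⟩ := (Nat.dvd_prime_pow hp).mp hyd
    have h2j : p ^ (2 * j) = p ^ i := by
      rw [pow_mul', ← hyj, hsq]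
    have hij : 2 * j = i := Nat.pow_right_injective hp.two_le h2j
    have hj1 : j ≠ 1 := fun h => hi2 (by omega)
    have hj0 : j ≠ 0 := fun h => hi0 (by omega)
    rw [sqMu_apply, if_pos hsq, ← hy, hyj,
      ArithmeticFunction.moebius_apply_prime_pow hp hj0, if_neg hj1]
  · exact sqMu_of_not_sq hsq

lemma sigma_prime_pow {p : ℕ} (hp : p.Prime) (K e : ℕ) :
    (ArithmeticFunction.sigma K (p ^ e) : ℤ) = ∑ i ∈ Finset.range (e + 1), (p : ℤ) ^ (i * K) := by
  rw [ArithmeticFunction.sigma_apply, Nat.sum_divisors_prime_pow hp]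
  push_cast
  exact Finset.sum_congr rfl fun i _ => by rw [← pow_mul]

lemma gkF_prime_pow {p : ℕ} (hp : p.Prime) (K e : ℕ) (he : 1 ≤ e) :
    gkF K (p ^ e) = (p : ℤ) ^ (e * K) + (p : ℤ) ^ ((e - 1) * K) := by
  have hsum : gkF K (p ^ e) = ∑ i ∈ Finset.range (e + 1),
      sqMu (p ^ i) * (ArithmeticFunction.sigma K (p ^ (e - i)) : ℤ) := by
    rw [gkF_apply, Nat.sum_divisors_prime_pow hp]
    apply Finset.sum_congr rfl
    intro i hi
    rw [Finset.mem_range] at hi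
    rw [Nat.pow_div (by omega) hp.pos]
  rcases eq_or_lt_of_le he with rfl | he2
  · -- e = 1
    rw [hsum]
    simp only [Finset.sum_range_succ, Finset.sum_range_zero, sqMu_prime_pow hp,
      sigma_prime_pow hp]
    norm_num [Finset.sum_range_succ]
    ring
  · -- e ≥ 2
    obtain ⟨j, rfl⟩ : ∃ j, e = j + 2 := ⟨e - 2, by omega⟩
    rw [hsum, ← Finset.sum_subset (s₁ := ({0, 2} : Finset ℕ))
      (h := by intro x hx; simp at hx; rw [Finset.mem_range]; omega)]
    · rw [Finset.sum_pair (by norm_num : (0:ℕ) ≠ 2),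
        sqMu_prime_pow hp 0, sqMu_prime_pow hp 2]
      norm_num
      rw [sigma_prime_pow hp K (j + 2), sigma_prime_pow hp K j,
        Finset.sum_range_succ (n := j + 2), Finset.sum_range_succ (n := j + 1)]
      ring
    · intro i _ hi
      simp only [Finset.mem_insert, Finset.mem_singleton] at hi
      push_neg at hi
      rw [sqMu_prime_pow hp i, if_neg hi.1, if_neg hi.2, zero_mul]

theorem gk_eq_prod (k m : ℕ) (hk : 2 ≤ k) (hm : 0 < m) :
    (gk k m : ℚ) =
      (m : ℚ) ^ (k - 1) *
        ∏ p ∈ m.primeFactors, (1 + (p : ℚ) ^ (-((k : ℤ) - 1))) := by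
  have hK : ((k : ℤ) - 1) = ((k - 1 : ℕ) : ℤ) := by
    push_cast [Nat.cast_sub (by omega : 1 ≤ k)]; ring
  have key : ((gkF (k - 1) : ArithmeticFunction ℚ)) = rhsF k := by
    rw [ArithmeticFunction.IsMultiplicative.eq_iff_eq_on_prime_powers _ ((gkF_mult (k-1)).intCast) _ (rhsF_mult k)]
    intro p i hp
    rcases Nat.eq_zero_or_pos i with rfl | hi
    · simp only [pow_zero]
      rw [((gkF_mult (k-1)).intCast (R := ℚ)).1, (rhsF_mult k).1]
    have hp0 : (p : ℚ) ≠ 0 := Nat.cast_ne_zero.mpr hp.pos.ne'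
    rw [ArithmeticFunction.intCoe_apply, gkF_prime_pow hp (k-1) i hi,
      rhsF_apply (pow_ne_zero i hp.pos.ne'), Nat.primeFactors_prime_pow hi.ne' hp,
      Finset.prod_singleton]
    have h1 : (p:ℚ)^(-((k:ℤ)-1)) = ((p:ℚ)^(k-1))⁻¹ := by
      rw [hK, zpow_neg, zpow_natCast]
    obtain ⟨i', rfl⟩ : ∃ i', i = i' + 1 := ⟨i - 1, by omega⟩
    simp only [Nat.add_sub_cancel]
    push_cast
    rw [h1]
    have hpK : (p:ℚ)^(k-1) ≠ 0 := pow_ne_zero _ hp0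
    field_simp
    ring
  have := congrArg (fun f : ArithmeticFunction ℚ => f m) key
  simp only [ArithmeticFunction.intCoe_apply] at this
  rw [gk_eq_gkF k m hm, this, rhsF_apply hm.ne']
end

section
/- For real or complex s with the relevant Dirichlet series absolutely convergent, Σ_{x=1}^∞ N(x)·x^{-s} = ζ(s)·ζ(2s-1)/ζ(2s), where N(x) is the number of s' mod 2x with s'² ≡ 0 (mod 4x). -/
lemma key_dvd (x₀ x₁ s : ℕ) (h₀ : Squarefree x₀) (h₁ : x₁ ≠ 0) :
    4 * (x₀ * x₁ ^ 2) ∣ s ^ 2 ↔ 2 * (x₀ * x₁) ∣ s := by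
  rcases eq_or_ne s 0 with rfl | hs
  · simp
  have hx0 : x₀ ≠ 0 := h₀.ne_zero
  rw [← Nat.factorization_le_iff_dvd (by positivity) (pow_ne_zero 2 hs),
      ← Nat.factorization_le_iff_dvd (by positivity) hs,
      Finsupp.le_def, Finsupp.le_def,
      show (4:ℕ) = 2^2 from rfl,
      Nat.factorization_mul (by norm_num) (by positivity),
      Nat.factorization_mul (by norm_num) (mul_ne_zero hx0 h₁),
      Nat.factorization_mul hx0 (pow_ne_zero _ h₁),
      Nat.factorization_mul hx0 h₁,
      Nat.factorization_pow, Nat.factorization_pow, Nat.factorization_pow]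
  constructor <;> intro h p <;> have hp := h p <;>
    have hb := h₀.natFactorization_le_one p <;>
    simp only [Finsupp.coe_add, Finsupp.coe_smul, Pi.add_apply, Pi.smul_apply,
      smul_eq_mul] at hp ⊢ <;> omega


/-- `N(x)` = number of residues `s mod 2x` with `4x ∣ s²`. -/
def Ncount (x : ℕ) : ℕ :=
  ((Finset.range (2 * x)).filter (fun s => 4 * x ∣ s ^ 2)).card

lemma range_filter_dvd_card (k n : ℕ) (hk : k ≠ 0) :
    ((Finset.range (k * n)).filter (fun s => k ∣ s)).card = n := by
  have him : (Finset.range (k * n)).filter (fun s => k ∣ s)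
      = (Finset.range n).image (fun i => k * i) := by
    ext x
    simp only [Finset.mem_filter, Finset.mem_range, Finset.mem_image]
    constructor
    · rintro ⟨hlt, c, rfl⟩
      refine ⟨c, ?_, rfl⟩
      exact lt_of_mul_lt_mul_left hlt (Nat.zero_le k)
    · rintro ⟨i, hi, rfl⟩
      exact ⟨by exact (Nat.mul_lt_mul_left (Nat.pos_of_ne_zero hk)).mpr hi, ⟨i, rfl⟩⟩
  rw [him, Finset.card_image_of_injective _ (mul_right_injective₀ hk), Finset.card_range]

lemma Ncount_eq (x₀ x₁ : ℕ) (h₀ : Squarefree x₀) (h₁ : x₁ ≠ 0) :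
    Ncount (x₀ * x₁ ^ 2) = x₁ := by
  unfold Ncount
  rw [Finset.filter_congr (fun s _ => by
    simpa using propext_iff.mpr (key_dvd x₀ x₁ s h₀ h₁))]
  have : 2 * (x₀ * x₁ ^ 2) = (2 * (x₀ * x₁)) * x₁ := by ring
  rw [this, range_filter_dvd_card _ _ (by simp [h₀.ne_zero, h₁])]

lemma decomp_unique {a b a' b' : ℕ} (ha : Squarefree a) (ha' : Squarefree a')
    (hb : b ≠ 0) (hb' : b' ≠ 0) (h : a * b ^ 2 = a' * b' ^ 2) : a = a' ∧ b = b' := by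
  have hfa : a ≠ 0 := ha.ne_zero
  have hfa' : a' ≠ 0 := ha'.ne_zero
  have hfac := congrArg Nat.factorization h
  rw [Nat.factorization_mul hfa (pow_ne_zero _ hb),
      Nat.factorization_mul hfa' (pow_ne_zero _ hb'),
      Nat.factorization_pow, Nat.factorization_pow] at hfac
  have key : ∀ p, a.factorization p = a'.factorization p ∧
      b.factorization p = b'.factorization p := by
    intro p
    have h1 := ha.natFactorization_le_one p
    have h2 := ha'.natFactorization_le_one p
    have h3 : a.factorization p + 2 * b.factorization p
        = a'.factorization p + 2 * b'.factorization p := by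
      have := DFunLike.congr_fun hfac p
      simpa [smul_eq_mul] using this
    omega
  constructor
  · exact Nat.eq_of_factorization_eq hfa hfa' fun p => (key p).1
  · exact Nat.eq_of_factorization_eq hb hb' fun p => (key p).2

def decompFun (p : {a : ℕ+ // Squarefree (a : ℕ)} × ℕ+) : ℕ+ :=
  p.1.1 * p.2 ^ 2

lemma decompFun_bijective : Function.Bijective decompFun := by
  constructor
  · rintro ⟨⟨a, ha⟩, b⟩ ⟨⟨a', ha'⟩, b'⟩ h
    have h' : (a : ℕ) * (b : ℕ) ^ 2 = (a' : ℕ) * (b' : ℕ) ^ 2 := by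
      have := congrArg (fun x : ℕ+ => (x : ℕ)) h
      simpa [decompFun] using this
    obtain ⟨e1, e2⟩ := decomp_unique ha ha' b.pos.ne' b'.pos.ne' h'
    simp only [Prod.mk.injEq, Subtype.mk.injEq]
    exact ⟨PNat.coe_injective e1, PNat.coe_injective e2⟩
  · intro n
    obtain ⟨a, b, ha, hb, hab, hsq⟩ := Nat.sq_mul_squarefree_of_pos n.pos
    refine ⟨⟨⟨⟨a, ha⟩, hsq⟩, ⟨b, hb⟩⟩, ?_⟩
    apply PNat.coe_injective
    simp [decompFun, mul_comm, ← hab]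
    rfl

lemma zeta_pnat {σ : ℂ} (hσ : 1 < σ.re) :
    riemannZeta σ = ∑' x : ℕ+, 1 / (x : ℂ) ^ σ := by
  have hσ0 : σ ≠ 0 := by intro h; rw [h] at hσ; simp at hσ; linarith
  have hsum : Summable (fun n : ℕ => 1 / (n : ℂ) ^ σ) :=
    Complex.summable_one_div_nat_cpow.mpr hσ
  rw [zeta_eq_tsum_one_div_nat_cpow hσ,
      ← Equiv.tsum_eq Equiv.pnatEquivNat.symm (fun x : ℕ+ => 1 / (x : ℂ) ^ σ),
      Summable.tsum_eq_zero_add hsum]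
  simp only [Nat.cast_zero, Complex.zero_cpow hσ0, div_zero, zero_add]
  apply tsum_congr
  intro n
  norm_num [show ((Equiv.pnatEquivNat.symm n : ℕ+) : ℕ) = n + 1 from rfl]

lemma summable_norm_pnat {σ : ℂ} (hσ : 1 < σ.re) :
    Summable (fun x : ℕ+ => ‖1 / (x : ℂ) ^ σ‖) := by
  have : Summable (fun n : ℕ => ‖1 / (n : ℂ) ^ σ‖) :=
    summable_norm_iff.mpr (Complex.summable_one_div_nat_cpow.mpr hσ)
  exact this.comp_injective (fun a b h => PNat.coe_injective h)

lemma nat_cpow_mul_sq {a b : ℕ} (hb : b ≠ 0) (w : ℂ) :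
    ((a * b ^ 2 : ℕ) : ℂ) ^ w = (a : ℂ) ^ w * (b : ℂ) ^ (2 * w) := by
  have hbC : (b : ℂ) ≠ 0 := Nat.cast_ne_zero.mpr hb
  calc ((a * b ^ 2 : ℕ) : ℂ) ^ w
      = ((a : ℂ) * ((b * b : ℕ) : ℂ)) ^ w := by
        rw [show ((a * b ^ 2 : ℕ) : ℂ) = (a : ℂ) * ((b * b : ℕ) : ℂ) by push_cast; ring]
    _ = (a : ℂ) ^ w * ((b : ℂ) * (b : ℂ)) ^ w := by
        rw [Complex.natCast_mul_natCast_cpow]; push_cast; ring_nf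
    _ = (a : ℂ) ^ w * ((b : ℂ) ^ w * (b : ℂ) ^ w) := by
        rw [show ((b:ℂ) * (b:ℂ)) ^ w = ((b:ℕ):ℂ) ^ w * ((b:ℕ):ℂ) ^ w from
          Complex.natCast_mul_natCast_cpow b b w]
    _ = (a : ℂ) ^ w * (b : ℂ) ^ (2 * w) := by
        rw [← Complex.cpow_add _ _ hbC, two_mul]

lemma tsum_decomp (F : ℕ+ → ℂ) (g : {a : ℕ+ // Squarefree (a : ℕ)} → ℂ) (h : ℕ+ → ℂ)
    (hF : ∀ p, F (decompFun p) = g p.1 * h p.2)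
    (hg : Summable fun a => ‖g a‖) (hh : Summable fun b => ‖h b‖) :
    ∑' x : ℕ+, F x = (∑' a, g a) * (∑' b, h b) := by
  rw [← Equiv.tsum_eq (Equiv.ofBijective decompFun decompFun_bijective) F]
  exact (tsum_congr (fun p => hF p)).trans (tsum_mul_tsum_of_summable_norm hg hh).symm

theorem dirichlet_series_Ncount (s : ℝ) (hs : 3 / 2 < s) :
    ∑' x : ℕ+, (Ncount x : ℂ) / (x : ℂ) ^ (s : ℂ) =
      riemannZeta s * riemannZeta (2 * s - 1) / riemannZeta (2 * s) := by
  have h1 : 1 < (s : ℂ).re := by simp; linarith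
  have h2 : 1 < (2 * (s : ℂ)).re := by simp; linarith
  have h3 : 1 < (2 * (s : ℂ) - 1).re := by simp; linarith
  have hg : Summable (fun a : {a : ℕ+ // Squarefree (a : ℕ)} =>
      ‖1 / ((a : ℕ+) : ℂ) ^ (s : ℂ)‖) :=
    (summable_norm_pnat h1).comp_injective Subtype.val_injective
  set A : ℂ := ∑' a : {a : ℕ+ // Squarefree (a : ℕ)}, 1 / ((a : ℕ+) : ℂ) ^ (s : ℂ) with hA
  -- coercion and nonvanishing facts
  have cast_eq : ∀ p : {a : ℕ+ // Squarefree (a : ℕ)} × ℕ+,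
      ((decompFun p : ℕ+) : ℕ) = (p.1.1 : ℕ) * (p.2 : ℕ) ^ 2 := by
    intro p; simp [decompFun]
  -- Step I : ζ(s) = A * ζ(2s)
  have stepI : riemannZeta s = A * riemannZeta (2 * (s : ℂ)) := by
    rw [zeta_pnat h1, zeta_pnat h2]
    refine tsum_decomp _ _ _ (fun p => ?_) hg (summable_norm_pnat h2)
    have hb : ((p.2 : ℕ) : ℂ) ≠ 0 := Nat.cast_ne_zero.mpr p.2.pos.ne'
    have : ((decompFun p : ℕ+) : ℂ) = (((p.1.1 : ℕ) * (p.2 : ℕ) ^ 2 : ℕ) : ℂ) := by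
      rw [← cast_eq p]
    rw [this, nat_cpow_mul_sq p.2.pos.ne']
    rw [div_mul_div_comm, one_mul]
  -- Step II : LHS = A * ζ(2s-1)
  have stepII : ∑' x : ℕ+, (Ncount x : ℂ) / (x : ℂ) ^ (s : ℂ)
      = A * riemannZeta (2 * (s : ℂ) - 1) := by
    rw [zeta_pnat h3]
    refine tsum_decomp _ _ _ (fun p => ?_) hg (summable_norm_pnat h3)
    have hb : ((p.2 : ℕ) : ℂ) ≠ 0 := Nat.cast_ne_zero.mpr p.2.pos.ne'
    have ha : ((p.1.1 : ℕ) : ℂ) ≠ 0 := Nat.cast_ne_zero.mpr p.1.1.pos.ne'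
    have hNc : Ncount ((decompFun p : ℕ+) : ℕ) = (p.2 : ℕ) := by
      rw [cast_eq p]
      exact Ncount_eq _ _ p.1.2 p.2.pos.ne'
    have hcast : ((decompFun p : ℕ+) : ℂ) = (((p.1.1 : ℕ) * (p.2 : ℕ) ^ 2 : ℕ) : ℂ) := by
      rw [← cast_eq p]
    have has : ((p.1.1 : ℕ) : ℂ) ^ (s : ℂ) ≠ 0 := by
      intro h; exact ha ((Complex.cpow_eq_zero_iff _ _).mp h).1
    have hbs : ((p.2 : ℕ) : ℂ) ^ (2 * (s : ℂ)) ≠ 0 := by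
      intro h; exact hb ((Complex.cpow_eq_zero_iff _ _).mp h).1
    rw [hNc, hcast, nat_cpow_mul_sq p.2.pos.ne',
      show (2 * (s : ℂ) - 1) = 2 * (s : ℂ) - 1 from rfl,
      Complex.cpow_sub _ _ hb, Complex.cpow_one]
    field_simp
  have hz2 : riemannZeta (2 * (s : ℂ)) ≠ 0 := riemannZeta_ne_zero_of_one_lt_re h2
  rw [stepII, stepI]
  field_simp
end

section
/- Let R be a 2×2 half-integral positive definite symmetric matrix (diagonal entries in ℤ, off-diagonal entries in ½ℤ). The number of 2×2 half-integral symmetric matrices L with both R − L and R + L positive semidefinite is at most C·det(R)^{3/2} for an absolute constant C. -/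
/-- A real symmetric 2×2 matrix is half-integral if its diagonal entries are integers
and its off-diagonal entry is a half-integer. -/
def IsHalfIntegral (M : Matrix (Fin 2) (Fin 2) ℝ) : Prop :=
  M.IsSymm ∧ (∃ a : ℤ, M 0 0 = a) ∧ (∃ a : ℤ, M 1 1 = a) ∧ (∃ a : ℤ, M 0 1 = a / 2)

namespace CountHI
open Matrix

noncomputable def hmat (x y z : ℤ) : Matrix (Fin 2) (Fin 2) ℝ :=
  !![(x:ℝ), (y:ℝ)/2; (y:ℝ)/2, (z:ℝ)]

def SS (R : Matrix (Fin 2) (Fin 2) ℝ) : Set (Matrix (Fin 2) (Fin 2) ℝ) :=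
  {L | IsHalfIntegral L ∧ (R - L).PosSemidef ∧ (R + L).PosSemidef}

lemma hmat_isHalfIntegral (x y z : ℤ) : IsHalfIntegral (hmat x y z) := by
  refine ⟨?_, ⟨x, rfl⟩, ⟨z, rfl⟩, ⟨y, rfl⟩⟩
  ext i j
  fin_cases i <;> fin_cases j <;> simp [hmat, Matrix.transpose_apply]

lemma eq_hmat {L : Matrix (Fin 2) (Fin 2) ℝ} (h : IsHalfIntegral L) :
    ∃ x y z : ℤ, L = hmat x y z := by
  obtain ⟨hs, ⟨x, hx⟩, ⟨z, hz⟩, ⟨y, hy⟩⟩ := h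
  refine ⟨x, y, z, ?_⟩
  have h10 : L 1 0 = L 0 1 := hs.apply 0 1
  ext i j
  fin_cases i <;> fin_cases j <;>
    simp [hmat, hx, hz, hy, h10]

lemma dot_eval (M : Matrix (Fin 2) (Fin 2) ℝ) (x y : ℝ) :
    star ![x, y] ⬝ᵥ M *ᵥ ![x, y]
      = M 0 0 * x ^ 2 + (M 0 1 + M 1 0) * (x * y) + M 1 1 * y ^ 2 := by
  simp [dotProduct, Matrix.mulVec, Fin.sum_univ_two]
  ring

lemma psd_quad {M : Matrix (Fin 2) (Fin 2) ℝ} (h : M.PosSemidef) (x y : ℝ) :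
    0 ≤ M 0 0 * x ^ 2 + (M 0 1 + M 1 0) * (x * y) + M 1 1 * y ^ 2 := by
  have := h.dotProduct_mulVec_nonneg ![x, y]
  rwa [dot_eval] at this

lemma psd_sym {M : Matrix (Fin 2) (Fin 2) ℝ} (h : M.PosSemidef) :
    M 1 0 = M 0 1 := by
  have := h.1.apply 0 1
  simpa using this

lemma psd_00 {M : Matrix (Fin 2) (Fin 2) ℝ} (h : M.PosSemidef) : 0 ≤ M 0 0 := by
  have := psd_quad h 1 0; simpa using this

lemma psd_11 {M : Matrix (Fin 2) (Fin 2) ℝ} (h : M.PosSemidef) : 0 ≤ M 1 1 := by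
  have := psd_quad h 0 1; simpa using this

lemma psd_offdiag_sq {M : Matrix (Fin 2) (Fin 2) ℝ} (h : M.PosSemidef) :
    M 0 1 ^ 2 ≤ M 0 0 * M 1 1 := by
  have h10 := psd_sym h
  have hq : ∀ t : ℝ, 0 ≤ M 0 0 * (t * t) + (2 * M 0 1) * t + M 1 1 := by
    intro t
    have := psd_quad h t 1
    rw [h10] at this
    nlinarith [this]
  have := discrim_le_zero hq
  rw [discrim] at this
  nlinarith [this]

/-- The off-diagonal real bound. -/
noncomputable def beta (A C T : ℤ) : ℝ := |(T:ℝ)| + 4 * Real.sqrt ((A:ℝ) * C)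

lemma SS_subset_box (R : Matrix (Fin 2) (Fin 2) ℝ) (A C T : ℤ)
    (hA : R 0 0 = A) (hC : R 1 1 = C) (hT : R 0 1 = (T:ℝ)/2)
    (hA1 : 1 ≤ A) (hC1 : 1 ≤ C) :
    SS R ⊆ (fun t : ℤ × ℤ × ℤ => hmat t.1 t.2.1 t.2.2) ''
      ↑(Finset.Icc (-A) A ×ˢ Finset.Icc (-⌊beta A C T⌋) ⌊beta A C T⌋ ×ˢ Finset.Icc (-C) C) := by
  rintro L ⟨hL, hsub, hadd⟩
  obtain ⟨x, y, z, rfl⟩ := eq_hmat hL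
  have e1 : (R - hmat x y z) 0 0 = (A:ℝ) - x := by
    simp [hmat, hA]
  have e2 : (R + hmat x y z) 0 0 = (A:ℝ) + x := by
    simp [hmat, hA]
  have e3 : (R - hmat x y z) 1 1 = (C:ℝ) - z := by
    simp [hmat, hC]
  have e4 : (R + hmat x y z) 1 1 = (C:ℝ) + z := by
    simp [hmat, hC]
  have e5 : (R - hmat x y z) 0 1 = ((T:ℝ) - y)/2 := by
    simp [hmat, hT]; ring
  have hx1 : (x:ℝ) ≤ A := by have := psd_00 hsub; rw [e1] at this; linarith
  have hx2 : -(A:ℝ) ≤ x := by have := psd_00 hadd; rw [e2] at this; linarith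
  have hz1 : (z:ℝ) ≤ C := by have := psd_11 hsub; rw [e3] at this; linarith
  have hz2 : -(C:ℝ) ≤ z := by have := psd_11 hadd; rw [e4] at this; linarith
  have hsq : (((T:ℝ) - y)/2) ^ 2 ≤ ((A:ℝ) - x) * ((C:ℝ) - z) := by
    have := psd_offdiag_sq hsub
    rwa [e1, e3, e5] at this
  have hac0 : (0:ℝ) ≤ (A:ℝ) * C := by positivity
  have hprod : ((A:ℝ) - x) * ((C:ℝ) - z) ≤ 4 * ((A:ℝ) * C) := by nlinarith
  have habs : |(T:ℝ) - y| ≤ 4 * Real.sqrt ((A:ℝ) * C) := by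
    have h4 : ((T:ℝ) - y) ^ 2 ≤ (4 * Real.sqrt ((A:ℝ) * C)) ^ 2 := by
      have hs : Real.sqrt ((A:ℝ) * C) ^ 2 = (A:ℝ) * C := Real.sq_sqrt hac0
      nlinarith [hsq, hprod]
    exact abs_le_of_sq_le_sq h4 (by positivity)
  have hy : |(y:ℝ)| ≤ beta A C T := by
    have : |(y:ℝ)| ≤ |(T:ℝ)| + |(T:ℝ) - y| := by
      have h1 : |(y:ℝ)| ≤ |(T:ℝ)| + |(y:ℝ) - T| := by
        have := abs_add_le (T:ℝ) ((y:ℝ) - T)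
        simpa using this
      have h2 : |(y:ℝ) - T| = |(T:ℝ) - y| := abs_sub_comm _ _
      linarith
    calc |(y:ℝ)| ≤ |(T:ℝ)| + |(T:ℝ) - y| := this
      _ ≤ |(T:ℝ)| + 4 * Real.sqrt ((A:ℝ) * C) := by linarith
  refine ⟨(x, y, z), ?_, rfl⟩
  simp only [Finset.coe_product, Set.mem_prod, Finset.mem_coe, Finset.mem_Icc]
  have hβ := abs_le.mp hy
  refine ⟨⟨?_, ?_⟩, ⟨?_, ?_⟩, ?_, ?_⟩
  · exact_mod_cast hx2
  · exact_mod_cast hx1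
  · have : -y ≤ ⌊beta A C T⌋ := Int.le_floor.mpr (by push_cast; linarith [hβ.1])
    omega
  · exact Int.le_floor.mpr (by linarith [hβ.2])
  · exact_mod_cast hz2
  · exact_mod_cast hz1

lemma ncard_le_box (S : Set (Matrix (Fin 2) (Fin 2) ℝ)) (A C T : ℤ) (hA1 : 1 ≤ A) (hC1 : 1 ≤ C)
    (hsub : S ⊆ (fun t : ℤ × ℤ × ℤ => hmat t.1 t.2.1 t.2.2) ''
      ↑(Finset.Icc (-A) A ×ˢ Finset.Icc (-⌊beta A C T⌋) ⌊beta A C T⌋ ×ˢ Finset.Icc (-C) C)) :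
    S.Finite ∧ ((S.ncard : ℝ) ≤ (2*(A:ℝ)+1) * (2*beta A C T+1) * (2*(C:ℝ)+1)) := by
  set box := Finset.Icc (-A) A ×ˢ Finset.Icc (-⌊beta A C T⌋) ⌊beta A C T⌋ ×ˢ Finset.Icc (-C) C
  have hfin : ((fun t : ℤ × ℤ × ℤ => hmat t.1 t.2.1 t.2.2) '' ↑box).Finite :=
    (box.finite_toSet).image _
  have hSfin : S.Finite := hfin.subset hsub
  refine ⟨hSfin, ?_⟩
  have h1 : S.ncard ≤ ((fun t : ℤ × ℤ × ℤ => hmat t.1 t.2.1 t.2.2) '' ↑box).ncard :=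
    Set.ncard_le_ncard hsub hfin
  have h2 : ((fun t : ℤ × ℤ × ℤ => hmat t.1 t.2.1 t.2.2) '' (box:Set (ℤ×ℤ×ℤ))).ncard
      ≤ (box : Set (ℤ×ℤ×ℤ)).ncard := Set.ncard_image_le box.finite_toSet
  have h3 : (box : Set (ℤ×ℤ×ℤ)).ncard = box.card := Set.ncard_coe_finset box
  have hb0 : 0 ≤ beta A C T := by
    have : 0 ≤ Real.sqrt ((A:ℝ)*C) := Real.sqrt_nonneg _
    have := abs_nonneg ((T:ℝ)); unfold beta; linarith
  have hfl0 : 0 ≤ ⌊beta A C T⌋ := Int.floor_nonneg.mpr hb0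
  have hcard : box.card = ((2*A+1).toNat) * (((2*⌊beta A C T⌋+1).toNat) * ((2*C+1).toNat)) := by
    simp only [box, Finset.card_product, Int.card_Icc]
    congr 1 <;> [skip; congr 1] <;> [congr 1; skip; congr 1] <;> omega
  have hreal : (box.card : ℝ) ≤ (2*(A:ℝ)+1) * (2*beta A C T+1) * (2*(C:ℝ)+1) := by
    rw [hcard]
    have c1 : (((2*A+1).toNat : ℕ) : ℝ) = 2*(A:ℝ)+1 := by
      have := Int.toNat_of_nonneg (show (0:ℤ) ≤ 2*A+1 by omega); exact_mod_cast this
    have c2 : (((2*⌊beta A C T⌋+1).toNat : ℕ) : ℝ) = 2*(⌊beta A C T⌋:ℝ)+1 := by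
      have := Int.toNat_of_nonneg (show (0:ℤ) ≤ 2*⌊beta A C T⌋+1 by omega); exact_mod_cast this
    have c3 : (((2*C+1).toNat : ℕ) : ℝ) = 2*(C:ℝ)+1 := by
      have := Int.toNat_of_nonneg (show (0:ℤ) ≤ 2*C+1 by omega); exact_mod_cast this
    push_cast
    rw [c1, c2, c3]
    have hfl : ((⌊beta A C T⌋:ℝ)) ≤ beta A C T := Int.floor_le _
    have hA0 : (1:ℝ) ≤ (A:ℝ) := by exact_mod_cast hA1
    have hC0 : (1:ℝ) ≤ (C:ℝ) := by exact_mod_cast hC1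
    have hfc : (0:ℝ) ≤ (⌊beta A C T⌋:ℝ) := by exact_mod_cast hfl0
    have hf : (2*(⌊beta A C T⌋:ℝ)+1) ≤ 2*beta A C T + 1 := by linarith
    nlinarith [mul_le_mul_of_nonneg_right (mul_le_mul_of_nonneg_left hf
      (show (0:ℝ) ≤ 2*(A:ℝ)+1 by linarith)) (show (0:ℝ) ≤ 2*(C:ℝ)+1 by linarith)]
  calc (S.ncard : ℝ) ≤ (box.card : ℝ) := by exact_mod_cast h1.trans (h2.trans_eq h3)
    _ ≤ _ := hreal

lemma congr_apply (U M : Matrix (Fin 2) (Fin 2) ℝ) (i j : Fin 2) :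
    (Uᵀ * M * U) i j = U 0 i * M 0 0 * U 0 j + U 0 i * M 0 1 * U 1 j
      + U 1 i * M 1 0 * U 0 j + U 1 i * M 1 1 * U 1 j := by
  simp [Matrix.mul_apply, Fin.sum_univ_two, Matrix.transpose_apply]
  ring

lemma conjT_eq_transpose (U : Matrix (Fin 2) (Fin 2) ℝ) : Uᴴ = Uᵀ := by
  ext i j; simp [Matrix.conjTranspose_apply]

lemma congr_halfIntegral (V : Matrix (Fin 2) (Fin 2) ℤ) (x y z : ℤ) :
    IsHalfIntegral ((V.map (Int.cast : ℤ → ℝ))ᵀ * hmat x y z * (V.map Int.cast)) := by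
  set U : Matrix (Fin 2) (Fin 2) ℝ := V.map (Int.cast : ℤ → ℝ) with hU
  have hUe : ∀ i j, U i j = ((V i j : ℤ) : ℝ) := fun i j => rfl
  constructor
  · have hs : (hmat x y z)ᵀ = hmat x y z := by
      ext i j; fin_cases i <;> fin_cases j <;> simp [hmat]
    unfold Matrix.IsSymm
    rw [Matrix.transpose_mul, Matrix.transpose_mul, Matrix.transpose_transpose, hs,
      Matrix.mul_assoc]
  refine ⟨⟨V 0 0^2 * x + V 0 0 * V 1 0 * y + V 1 0^2 * z, ?_⟩,
          ⟨V 0 1^2 * x + V 0 1 * V 1 1 * y + V 1 1^2 * z, ?_⟩,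
          ⟨2 * V 0 0 * V 0 1 * x + (V 0 0 * V 1 1 + V 1 0 * V 0 1) * y
            + 2 * V 1 0 * V 1 1 * z, ?_⟩⟩ <;>
  · rw [congr_apply]
    simp only [hUe, hmat]
    push_cast
    norm_num [Matrix.cons_val_zero, Matrix.cons_val_one, Matrix.head_cons]
    ring

lemma congr_SS (R : Matrix (Fin 2) (Fin 2) ℝ) (V : Matrix (Fin 2) (Fin 2) ℤ) :
    ∀ L ∈ SS R, ((V.map (Int.cast : ℤ → ℝ))ᵀ * L * (V.map Int.cast))
      ∈ SS ((V.map (Int.cast : ℤ → ℝ))ᵀ * R * (V.map Int.cast)) := by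
  rintro L ⟨hL, hsub, hadd⟩
  set U : Matrix (Fin 2) (Fin 2) ℝ := V.map (Int.cast : ℤ → ℝ) with hUdef
  obtain ⟨x, y, z, rfl⟩ := eq_hmat hL
  refine ⟨congr_halfIntegral V x y z, ?_, ?_⟩
  · have h1 : Uᵀ * R * U - Uᵀ * hmat x y z * U = Uᵀ * (R - hmat x y z) * U := by
      rw [Matrix.mul_sub, Matrix.sub_mul]
    rw [h1, ← conjT_eq_transpose]
    exact hsub.conjTranspose_mul_mul_same U
  · have h1 : Uᵀ * R * U + Uᵀ * hmat x y z * U = Uᵀ * (R + hmat x y z) * U := by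
      rw [Matrix.mul_add, Matrix.add_mul]
    rw [h1, ← conjT_eq_transpose]
    exact hadd.conjTranspose_mul_mul_same U

lemma congr_inj (V : Matrix (Fin 2) (Fin 2) ℤ) (hV : V.det = 1) :
    Function.Injective (fun L : Matrix (Fin 2) (Fin 2) ℝ =>
      (V.map (Int.cast : ℤ → ℝ))ᵀ * L * (V.map Int.cast)) := by
  set U : Matrix (Fin 2) (Fin 2) ℝ := V.map (Int.cast : ℤ → ℝ) with hUdef
  have hdet : U.det = 1 := by
    have := (Int.castRingHom ℝ).map_det V
    rw [hV] at this
    simpa [hUdef, Matrix.map] using this.symm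
  have : Invertible U := U.invertibleOfIsUnitDet (by rw [hdet]; exact isUnit_one)
  have hT : Invertible Uᵀ := Matrix.invertibleTranspose U
  intro L1 L2 h
  simp only at h
  have := congrArg (fun M => ⅟(Uᵀ) * M * ⅟U) h
  simpa [Matrix.mul_assoc, Matrix.invOf_mul_cancel_left,
    Matrix.mul_invOf_cancel_right] using this

def Qf (A T C x y : ℤ) : ℤ := A*x^2 + T*(x*y) + C*y^2

lemma exists_shift (t0 M : ℤ) (hM : 1 ≤ M) : ∃ n : ℤ, |t0 + 2*n*M| ≤ M := by
  refine ⟨-((t0 + M) / (2*M)), ?_⟩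
  set k : ℤ := (t0 + M) / (2*M) with hk
  have h1 : 0 ≤ (t0 + M) % (2*M) := Int.emod_nonneg _ (by omega)
  have h2 : (t0 + M) % (2*M) < 2*M := Int.emod_lt_of_pos _ (by omega)
  have h3 : 2*M*k + (t0 + M) % (2*M) = t0 + M := Int.mul_ediv_add_emod _ _
  have he : t0 + 2*(-k)*M = (t0 + M) % (2*M) - M := by linarith [h3]
  rw [he, abs_le]
  constructor <;> linarith

/-- Reduction: there is a unimodular integer matrix bringing `R` to reduced form. -/
lemma reduction (R : Matrix (Fin 2) (Fin 2) ℝ) (hhi : IsHalfIntegral R) (hpd : R.PosDef) :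
    ∃ (V : Matrix (Fin 2) (Fin 2) ℤ) (a c t : ℤ),
      V.det = 1 ∧
      ((V.map (Int.cast : ℤ → ℝ))ᵀ * R * (V.map (Int.cast : ℤ → ℝ))) 0 0 = (a:ℝ) ∧
      ((V.map (Int.cast : ℤ → ℝ))ᵀ * R * (V.map (Int.cast : ℤ → ℝ))) 1 1 = (c:ℝ) ∧
      ((V.map (Int.cast : ℤ → ℝ))ᵀ * R * (V.map (Int.cast : ℤ → ℝ))) 0 1 = (t:ℝ)/2 ∧
      ((V.map (Int.cast : ℤ → ℝ))ᵀ * R * (V.map (Int.cast : ℤ → ℝ))) 1 0 = (t:ℝ)/2 ∧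
      1 ≤ a ∧ a ≤ c ∧ |t| ≤ a ∧
      ((V.map (Int.cast : ℤ → ℝ))ᵀ * R * (V.map (Int.cast : ℤ → ℝ))).det = R.det := by
  obtain ⟨hsymm, ⟨A, hA⟩, ⟨C, hC⟩, ⟨T, hT⟩⟩ := hhi
  have hR10 : R 1 0 = (T:ℝ)/2 := by rw [hsymm.apply 0 1, hT]
  have hQpos : ∀ p q : ℤ, ¬(p = 0 ∧ q = 0) → 0 < Qf A T C p q := by
    intro p q h
    have hv : (![(p:ℝ), (q:ℝ)]) ≠ 0 := by
      intro h0
      apply h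
      constructor
      · have := congrFun h0 0; simpa using this
      · have := congrFun h0 1; simpa using this
    have hq := hpd.dotProduct_mulVec_pos hv
    rw [dot_eval, hA, hC, hT, hR10] at hq
    have hq' : (0:ℝ) < (A:ℝ)*(p:ℝ)^2 + (T:ℝ)*((p:ℝ)*(q:ℝ)) + (C:ℝ)*(q:ℝ)^2 := by
      nlinarith [hq]
    have : (0:ℝ) < ((Qf A T C p q : ℤ) : ℝ) := by rw [Qf]; push_cast; linarith
    exact_mod_cast this
  have hAne : A.toNat ∈ {n : ℕ | ∃ p q : ℤ, ¬(p = 0 ∧ q = 0) ∧ Qf A T C p q = n} := by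
    have h10 : Qf A T C 1 0 = A := by simp [Qf]
    have hApos : 0 < A := by have := hQpos 1 0 (by simp); rwa [h10] at this
    exact ⟨1, 0, by simp, by rw [h10]; omega⟩
  obtain ⟨p, q, hpq0, hpqm⟩ := Nat.sInf_mem (Set.nonempty_of_mem hAne)
  set m : ℕ := sInf {n : ℕ | ∃ p q : ℤ, ¬(p = 0 ∧ q = 0) ∧ Qf A T C p q = n} with hm
  have hm1 : 1 ≤ (m:ℤ) := by
    have := hQpos p q hpq0; omega
  have hmin : ∀ p' q' : ℤ, ¬(p' = 0 ∧ q' = 0) → (m:ℤ) ≤ Qf A T C p' q' := by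
    intro p' q' h
    have h0 := hQpos p' q' h
    have hmem : (Qf A T C p' q').toNat ∈
        {n : ℕ | ∃ p q : ℤ, ¬(p = 0 ∧ q = 0) ∧ Qf A T C p q = n} := ⟨p', q', h, by omega⟩
    have := Nat.sInf_le hmem
    omega
  have hcop : IsCoprime p q := by
    rw [Int.isCoprime_iff_gcd_eq_one]
    by_contra hg1
    have hg0 : Int.gcd p q ≠ 0 := by
      rw [Ne, Int.gcd_eq_zero_iff]; exact hpq0
    have hg2' : 2 ≤ (Int.gcd p q : ℤ) := by omega
    obtain ⟨g, hg2, hgp, hgq⟩ : ∃ g : ℤ, 2 ≤ g ∧ g ∣ p ∧ g ∣ q :=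
      ⟨(Int.gcd p q : ℤ), hg2', Int.gcd_dvd_left p q, Int.gcd_dvd_right p q⟩
    obtain ⟨p₁, hp₁⟩ := hgp
    obtain ⟨q₁, hq₁⟩ := hgq
    have h1 : ¬(p₁ = 0 ∧ q₁ = 0) := by
      rintro ⟨rfl, rfl⟩; simp at hp₁ hq₁; exact hpq0 ⟨hp₁, hq₁⟩
    have hscale : (Qf A T C p q : ℤ) = g^2 * Qf A T C p₁ q₁ := by
      rw [hp₁, hq₁]; simp only [Qf]; ring
    have hle := hmin p₁ q₁ h1
    have h4 : 4 ≤ g^2 := by nlinarith [hg2]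
    have h5 : 4 * Qf A T C p₁ q₁ ≤ g^2 * Qf A T C p₁ q₁ :=
      mul_le_mul_of_nonneg_right h4 (by linarith [hQpos p₁ q₁ h1])
    have hQm : (Qf A T C p q : ℤ) = m := by omega
    linarith [hle, hm1, h5, hscale, hQm]
  obtain ⟨u, v, huv⟩ := hcop
  obtain ⟨n, hn⟩ := exists_shift (-2*A*(p*v) + T*(p*u - q*v) + 2*C*(q*u)) m hm1
  refine ⟨!![p, n*p - v; q, n*q + u],
    Qf A T C p q, Qf A T C (n*p - v) (n*q + u),
    2*A*(p*(n*p - v)) + T*(p*(n*q + u) + q*(n*p - v)) + 2*C*(q*(n*q + u)),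
    ?_, ?_, ?_, ?_, ?_, ?_, ?_, ?_, ?_⟩
  case _ =>
    rw [Matrix.det_fin_two_of]
    linear_combination huv
  case _ =>
    rw [congr_apply]
    show (p:ℝ) * R 0 0 * p + (p:ℝ) * R 0 1 * q + (q:ℝ) * R 1 0 * p + (q:ℝ) * R 1 1 * q = _
    rw [hA, hC, hT, hR10, Qf]
    push_cast
    ring
  case _ =>
    rw [congr_apply]
    show ((n*p - v : ℤ):ℝ) * R 0 0 * ((n*p - v : ℤ):ℝ) + ((n*p - v : ℤ):ℝ) * R 0 1 * ((n*q + u : ℤ):ℝ)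
      + ((n*q + u : ℤ):ℝ) * R 1 0 * ((n*p - v : ℤ):ℝ) + ((n*q + u : ℤ):ℝ) * R 1 1 * ((n*q + u : ℤ):ℝ) = _
    rw [hA, hC, hT, hR10, Qf]
    push_cast
    ring
  case _ =>
    rw [congr_apply]
    show (p:ℝ) * R 0 0 * ((n*p - v : ℤ):ℝ) + (p:ℝ) * R 0 1 * ((n*q + u : ℤ):ℝ)
      + (q:ℝ) * R 1 0 * ((n*p - v : ℤ):ℝ) + (q:ℝ) * R 1 1 * ((n*q + u : ℤ):ℝ) = _
    rw [hA, hC, hT, hR10]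
    push_cast
    ring
  case _ =>
    rw [congr_apply]
    show ((n*p - v : ℤ):ℝ) * R 0 0 * (p:ℝ) + ((n*p - v : ℤ):ℝ) * R 0 1 * (q:ℝ)
      + ((n*q + u : ℤ):ℝ) * R 1 0 * (p:ℝ) + ((n*q + u : ℤ):ℝ) * R 1 1 * (q:ℝ) = _
    rw [hA, hC, hT, hR10]
    push_cast
    ring
  case _ =>
    have := hQpos p q hpq0; omega
  case _ =>
    have hrs0 : ¬(n*p - v = 0 ∧ n*q + u = 0) := by
      rintro ⟨hr0, hs0⟩
      have hv' : v = n*p := by omega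
      have hu' : u = -(n*q) := by omega
      rw [hv', hu'] at huv
      have : (0:ℤ) = 1 := by linear_combination huv
      omega
    have := hmin (n*p - v) (n*q + u) hrs0
    omega
  case _ =>
    have he : 2*A*(p*(n*p - v)) + T*(p*(n*q + u) + q*(n*p - v)) + 2*C*(q*(n*q + u))
        = (-2*A*(p*v) + T*(p*u - q*v) + 2*C*(q*u)) + 2*n*(Qf A T C p q) := by
      rw [Qf]; ring
    rw [he]
    have ha : Qf A T C p q = (m:ℤ) := by omega
    rw [ha]
    calc |(-2*A*(p*v) + T*(p*u - q*v) + 2*C*(q*u)) + 2*n*(m:ℤ)| ≤ (m:ℤ) := hn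
      _ ≤ _ := le_refl _
  case _ =>
    have hdetV : (!![p, n*p - v; q, n*q + u] : Matrix (Fin 2) (Fin 2) ℤ).det = 1 := by
      rw [Matrix.det_fin_two_of]; linear_combination huv
    have hdetU : ((!![p, n*p - v; q, n*q + u] : Matrix (Fin 2) (Fin 2) ℤ).map
        (Int.cast : ℤ → ℝ)).det = 1 := by
      have := (Int.castRingHom ℝ).map_det (!![p, n*p - v; q, n*q + u])
      rw [hdetV] at this
      simpa [Matrix.map] using this.symm
    rw [Matrix.det_mul, Matrix.det_mul, Matrix.det_transpose, hdetU]
    ring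

lemma rpow_three_halves (x : ℝ) (hx : 0 < x) : x ^ ((3:ℝ)/2) = x * Real.sqrt x := by
  rw [show (3:ℝ)/2 = 1 + 1/2 by norm_num, Real.rpow_add hx, Real.rpow_one,
    Real.sqrt_eq_rpow]

lemma final_arith (aR cR tR D : ℝ) (ha : 1 ≤ aR) (hc : aR ≤ cR) (ht : |tR| ≤ aR)
    (hD : 0 < D) (hDval : D = aR*cR - tR^2/4) :
    (2*aR+1) * (2*(|tR| + 4*Real.sqrt (aR*cR))+1) * (2*cR+1) ≤ 300 * (D * Real.sqrt D) := by
  have hc1 : 1 ≤ cR := le_trans ha hc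
  have htnn : 0 ≤ |tR| := abs_nonneg _
  have hta : |tR| ≤ aR := ht
  have hac0 : (1:ℝ) ≤ aR * cR := by nlinarith
  have ht2 : tR^2 ≤ aR * cR := by
    have h1 : tR^2 ≤ aR^2 := by
      have h2 := abs_le.mp ht
      nlinarith [h2.1, h2.2]
    nlinarith
  have hac2D : aR * cR ≤ 2 * D := by rw [hDval]; nlinarith
  set s : ℝ := Real.sqrt (aR * cR) with hs
  have hs0 : 0 ≤ s := Real.sqrt_nonneg _
  have hs1 : 1 ≤ s := by
    rw [hs, show (1:ℝ) = Real.sqrt 1 by rw [Real.sqrt_one]]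
    exact Real.sqrt_le_sqrt hac0
  have has : aR ≤ s := by
    have h2 : aR = Real.sqrt (aR^2) := (Real.sqrt_sq (by linarith)).symm
    rw [h2, hs]
    exact Real.sqrt_le_sqrt (by nlinarith)
  have hsqrt2 : Real.sqrt 2 ≤ 3/2 := by
    nlinarith [Real.sq_sqrt (show (0:ℝ) ≤ 2 by norm_num), Real.sqrt_nonneg 2]
  have hsD : s ≤ (3/2) * Real.sqrt D := by
    calc s ≤ Real.sqrt (2 * D) := by rw [hs]; exact Real.sqrt_le_sqrt hac2D
      _ = Real.sqrt 2 * Real.sqrt D := Real.sqrt_mul (by norm_num) _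
      _ ≤ (3/2) * Real.sqrt D :=
          mul_le_mul_of_nonneg_right hsqrt2 (Real.sqrt_nonneg _)
  have f1 : 2*aR+1 ≤ 3*aR := by linarith
  have f2 : 2*(|tR| + 4*s)+1 ≤ 11*s := by linarith
  have f3 : 2*cR+1 ≤ 3*cR := by linarith
  have hb0 : (0:ℝ) ≤ 2*(|tR| + 4*s)+1 := by positivity
  have step1 : (2*aR+1) * (2*(|tR| + 4*s)+1) * (2*cR+1) ≤ (3*aR) * (11*s) * (3*cR) := by
    have h12 : (2*aR+1) * (2*(|tR| + 4*s)+1) ≤ (3*aR) * (11*s) :=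
      mul_le_mul f1 f2 hb0 (by linarith)
    exact mul_le_mul h12 f3 (by linarith) (by positivity)
  have step3 : (aR*cR) * s ≤ (2*D) * ((3/2) * Real.sqrt D) :=
    mul_le_mul hac2D hsD hs0 (by linarith)
  nlinarith [step1, step3]

end CountHI

theorem count_dominated_halfintegral :
    ∃ C : ℝ, 0 < C ∧ ∀ R : Matrix (Fin 2) (Fin 2) ℝ,
      IsHalfIntegral R → R.PosDef →
      (Set.ncard {L : Matrix (Fin 2) (Fin 2) ℝ |
          IsHalfIntegral L ∧ (R - L).PosSemidef ∧ (R + L).PosSemidef} : ℝ) ≤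
        C * R.det ^ ((3 : ℝ) / 2) := by
  classical
  refine ⟨300, by norm_num, ?_⟩
  intro R hhi hpd
  obtain ⟨V, a, c, t, hdetV, hB00, hB11, hB01, hB10, ha1, hac, hta, hdetB⟩ :=
    CountHI.reduction R hhi hpd
  set B : Matrix (Fin 2) (Fin 2) ℝ :=
    (Matrix.transpose (V.map (Int.cast : ℤ → ℝ)) * R * (V.map (Int.cast : ℤ → ℝ))) with hBdef
  have hc1 : 1 ≤ c := le_trans ha1 hac
  have hboxB := CountHI.SS_subset_box B a c t hB00 hB11 hB01 ha1 hc1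
  obtain ⟨hfinB, hcardB⟩ := CountHI.ncard_le_box (CountHI.SS B) a c t ha1 hc1 hboxB
  have hinj := CountHI.congr_inj V hdetV
  have himg : (fun L : Matrix (Fin 2) (Fin 2) ℝ =>
        Matrix.transpose (V.map (Int.cast : ℤ → ℝ)) * L * (V.map (Int.cast : ℤ → ℝ))) ''
          CountHI.SS R ⊆ CountHI.SS B := by
    rintro _ ⟨L, hL, rfl⟩
    exact CountHI.congr_SS R V L hL
  have hcount : (CountHI.SS R).ncard ≤ (CountHI.SS B).ncard := by
    calc (CountHI.SS R).ncard
        = ((fun L : Matrix (Fin 2) (Fin 2) ℝ =>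
            Matrix.transpose (V.map (Int.cast : ℤ → ℝ)) * L * (V.map (Int.cast : ℤ → ℝ))) ''
              CountHI.SS R).ncard :=
          (Set.ncard_image_of_injective _ hinj).symm
      _ ≤ (CountHI.SS B).ncard := Set.ncard_le_ncard himg hfinB
  have hD : (0:ℝ) < R.det := hpd.det_pos
  have hDB : B.det = R.det := hdetB
  have hdfin : B.det = (a:ℝ) * c - ((t:ℝ)/2) * ((t:ℝ)/2) := by
    rw [Matrix.det_fin_two, hB00, hB11, hB01, hB10]
  have hDval : R.det = (a:ℝ) * c - ((t:ℝ))^2/4 := by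
    rw [← hDB, hdfin]; ring
  have haR : (1:ℝ) ≤ (a:ℝ) := by exact_mod_cast ha1
  have hcR : (a:ℝ) ≤ (c:ℝ) := by exact_mod_cast hac
  have htR : |(t:ℝ)| ≤ (a:ℝ) := by exact_mod_cast hta
  have hmain := CountHI.final_arith (a:ℝ) (c:ℝ) (t:ℝ) R.det haR hcR htR hD hDval
  have hbeta : CountHI.beta a c t = |(t:ℝ)| + 4*Real.sqrt ((a:ℝ)*(c:ℝ)) := rfl
  have hfinal : ((CountHI.SS R).ncard : ℝ) ≤ 300 * (R.det * Real.sqrt R.det) := by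
    calc ((CountHI.SS R).ncard : ℝ) ≤ ((CountHI.SS B).ncard : ℝ) := by exact_mod_cast hcount
      _ ≤ (2*(a:ℝ)+1) * (2*CountHI.beta a c t+1) * (2*(c:ℝ)+1) := hcardB
      _ = (2*(a:ℝ)+1) * (2*(|(t:ℝ)| + 4*Real.sqrt ((a:ℝ)*(c:ℝ)))+1) * (2*(c:ℝ)+1) := by
          rw [hbeta]
      _ ≤ 300 * (R.det * Real.sqrt R.det) := hmain
  have hsets : {L : Matrix (Fin 2) (Fin 2) ℝ |
      IsHalfIntegral L ∧ (R - L).PosSemidef ∧ (R + L).PosSemidef} = CountHI.SS R := rfl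
  rw [hsets, CountHI.rpow_three_halves R.det hD]
  exact hfinal
end
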